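/- Let P* ⊆ P(n̄) be admissible, let J be a maximal subsemigroup of I_{P*} and let α ∈ I_{P*} with α ∉ J. Then every β ∈ I_{P*} with rank(β) ≠ rank(α) satisfies β ∈ J. -/

import Mathlib

namespace IOFpar

/-- A partial injection on the chain `{1, …, n}`: a partial function with domain and
image contained in `{1, …, n}` that is injective where defined. -/
structure PInj (n : ℕ) where
  f : ℕ → Option ℕ
  mem_bounds : ∀ ⦃x y : ℕ⦄, f x = some y → x ∈ Finset.Icc 1 n ∧ y ∈ Finset.Icc 1 n
  inj : ∀ ⦃x₁ x₂ y : ℕ⦄, f x₁ = some y → f x₂ = some y → x₁ = x₂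

/-- The domain of a partial injection. -/
def PInj.dom {n : ℕ} (α : PInj n) : Finset ℕ :=
  (Finset.Icc 1 n).filter fun x => (α.f x).isSome

open Classical in
/-- The image of a partial injection. -/
noncomputable def PInj.im {n : ℕ} (α : PInj n) : Finset ℕ :=
  (Finset.Icc 1 n).filter fun y => ∃ x, α.f x = some y

/-- The rank of a partial injection: the size of its domain. -/
def PInj.rank {n : ℕ} (α : PInj n) : ℕ := α.dom.card

/-- The value of `α` at `x` (with junk value `0` outside the domain). -/
def PInj.app {n : ℕ} (α : PInj n) (x : ℕ) : ℕ := (α.f x).getD 0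

/-- Composition of partial injections: `α.comp β` applies `α` first, then `β`
(so it corresponds to the product `αβ` with arguments written on the left). -/
def PInj.comp {n : ℕ} (α β : PInj n) : PInj n where
  f x := (α.f x).bind β.f
  mem_bounds := by
    intro x y h
    rcases Option.bind_eq_some_iff.mp h with ⟨z, hz, hzy⟩
    exact ⟨(α.mem_bounds hz).1, (β.mem_bounds hzy).2⟩
  inj := by
    intro x₁ x₂ y h₁ h₂
    rcases Option.bind_eq_some_iff.mp h₁ with ⟨z₁, hz₁, hz₁y⟩
    rcases Option.bind_eq_some_iff.mp h₂ with ⟨z₂, hz₂, hz₂y⟩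
    obtain rfl : z₁ = z₂ := β.inj hz₁y hz₂y
    exact α.inj hz₁ hz₂

/-- The empty transformation `ε`. -/
def epsilon (n : ℕ) : PInj n where
  f _ := none
  mem_bounds := by intro x y h; simp at h
  inj := by intro x₁ x₂ y h; simp at h

/-- The fence (zig-zag) order on `{1, …, n}`: `k ≺ m` iff `|k - m| = 1`, `k` is odd
and `m` is even. -/
def fence (k m : ℕ) : Prop := (m = k + 1 ∨ k = m + 1) ∧ Odd k ∧ Even m

/-- `IOF n` is the set `IOF_n^par` of all partial injections on `{1, …, n}` that are
order-preserving, parity-preserving, fence-preserving, and whose inverse is also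
fence-preserving. -/
def IOF (n : ℕ) : Set (PInj n) :=
  {α | (∀ ⦃x y x' y' : ℕ⦄, α.f x = some x' → α.f y = some y' → x < y → x' < y') ∧
       (∀ ⦃x y : ℕ⦄, α.f x = some y → x % 2 = y % 2) ∧
       (∀ ⦃x y x' y' : ℕ⦄, α.f x = some x' → α.f y = some y' → fence x y → fence x' y') ∧
       (∀ ⦃x y x' y' : ℕ⦄, α.f x = some x' → α.f y = some y' → fence x' y' → fence x y)}

/-- The increasing enumeration of a finite set of naturals. -/
def sortedList (A : Finset ℕ) : List ℕ := A.sort (· ≤ ·)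

/-- The relation `∼` on subsets of `{1, …, n}`:
`A ∼ B` iff `|A| = |B|`, corresponding elements (in increasing order) have the
same parity, and consecutive elements are at distance 1 in `A` iff they are in `B`. -/
def sim (A B : Finset ℕ) : Prop :=
  A.card = B.card ∧
  (∀ (r : ℕ) (hA : r < (sortedList A).length) (hB : r < (sortedList B).length),
    (sortedList A)[r] % 2 = (sortedList B)[r] % 2) ∧
  (∀ (r : ℕ) (hA : r + 1 < (sortedList A).length) (hB : r + 1 < (sortedList B).length),
    ((sortedList A)[r + 1] = (sortedList A)[r] + 1 ↔
      (sortedList B)[r + 1] = (sortedList B)[r] + 1))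

/-- `P ⊆ P(n̄)` is admissible: it contains `∅`, is convex, and is closed under `∼`. -/
def Admissible (n : ℕ) (P : Set (Finset ℕ)) : Prop :=
  (∀ A ∈ P, A ⊆ Finset.Icc 1 n) ∧
  (∅ : Finset ℕ) ∈ P ∧
  (∀ A ∈ P, ∀ B ∈ P, ∀ C : Finset ℕ, A ⊆ C → C ⊆ B → C ∈ P) ∧
  (∀ y ∈ P, ∀ z : Finset ℕ, z ⊆ Finset.Icc 1 n → sim z y → z ∈ P)

/-- `I_X = {α ∈ IOF_n^par : dom(α) ∈ X}`. -/
def IX (n : ℕ) (X : Set (Finset ℕ)) : Set (PInj n) :=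
  {α | α ∈ IOF n ∧ α.dom ∈ X}

/-- An ideal of the monoid `IOF_n^par`. -/
def IsIdeal (n : ℕ) (I : Set (PInj n)) : Prop :=
  I.Nonempty ∧ I ⊆ IOF n ∧ ∀ a ∈ I, ∀ b ∈ IOF n, a.comp b ∈ I ∧ b.comp a ∈ I

/-- `del y t` is `y^[t+1]` in the paper's (1-based) notation: `y` with its `t`-th
smallest element removed (`t` being 0-based here). -/
def del (y : Finset ℕ) (t : ℕ) : Finset ℕ := y.erase ((sortedList y).getD t 0)

/-- `x ⊑ y`: `x` is obtained from `y` by removing one element. -/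
def sqsub (x y : Finset ℕ) : Prop := ∃ t < y.card, x = del y t

/-- `A_Γ = {Δ ∈ P : Δ ∼ Γ}`. -/
def Aset (P : Set (Finset ℕ)) (Γ : Finset ℕ) : Set (Finset ℕ) :=
  {Δ ∈ P | sim Δ Γ}

/-- `B_Γ = {Δ^[t] : Δ ∈ A_Γ, t ∈ {1,…,|Δ|}}`. -/
def Bset (P : Set (Finset ℕ)) (Γ : Finset ℕ) : Set (Finset ℕ) :=
  {D | ∃ Δ ∈ Aset P Γ, ∃ t < Δ.card, D = del Δ t}

/-- `B = {B_Γ : Γ ∈ P, |Γ| ≥ 2, |A_Γ| ≥ 2}`. -/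
def Bfam (P : Set (Finset ℕ)) : Set (Set (Finset ℕ)) :=
  {E | ∃ Γ ∈ P, 2 ≤ Γ.card ∧ 2 ≤ (Aset P Γ).ncard ∧ E = Bset P Γ}

/-- `C = {{g} : g ∈ P, (g ⊑ y for some y ∈ P with y ≁ z for all z ∈ P \ {y}) or
(g ⋢ z for all z ∈ P)}`. -/
def Cfam (P : Set (Finset ℕ)) : Set (Set (Finset ℕ)) :=
  {D | ∃ g ∈ P, D = {g} ∧
    ((∃ y ∈ P, sqsub g y ∧ ∀ z ∈ P, z ≠ y → ¬ sim y z) ∨ (∀ z ∈ P, ¬ sqsub g z))}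

/-- `BC_{Δ₁} = {Δ ∈ B ∪ C : x ∼ y for all x ∈ Δ, y ∈ Δ₁}`. -/
def BCset (P : Set (Finset ℕ)) (Δ₁ : Set (Finset ℕ)) : Set (Set (Finset ℕ)) :=
  {Δ ∈ Bfam P ∪ Cfam P | ∀ x ∈ Δ, ∀ y ∈ Δ₁, sim x y}

/-- `T_Δ = {c ∈ I_P : dom(c) ∈ Δ, im(c) ∈ Δ}`. -/
def Tset (n : ℕ) (P : Set (Finset ℕ)) (Δ : Set (Finset ℕ)) : Set (PInj n) :=
  {c ∈ IX n P | c.dom ∈ Δ ∧ c.im ∈ Δ}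

/-- `T_Q` for a pair `Q = (Q₁, Q₂)`. -/
def TQ (n : ℕ) (P : Set (Finset ℕ)) (Q₁ Q₂ : Set (Set (Finset ℕ))) : Set (PInj n) :=
  {c ∈ IX n P | (∃ Δ ∈ Q₁, c.dom ∈ Δ) ∧ (∃ Δ ∈ Q₂, c.im ∈ Δ)}

/-- `I_P^u`: the elements of `I_P` that are not expressible in the special product form. -/
def Iu (n : ℕ) (P : Set (Finset ℕ)) : Set (PInj n) :=
  {α ∈ IX n P | ¬ ∃ y₁ ∈ P, ∃ z₁ ∈ P, ∃ y₂ ∈ P, ∃ z₂ ∈ P, ∃ r < y₁.card, ∃ s < y₁.card,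
    y₁.card = z₁.card ∧ 2 ≤ y₁.card ∧
    sim y₂ y₁ ∧ sim z₂ z₁ ∧
    del y₁ r = y₁ ∩ z₁ ∧ del z₁ s = y₁ ∩ z₁ ∧
    sim (del y₂ r) (del z₂ s) ∧ sim (del z₂ s) (y₁ ∩ z₁) ∧
    α.dom = del y₂ r ∧ α.im = del z₂ s}

/-- `T` is a subsemigroup of `S` (a subset of `S` closed under composition). -/
def IsSubsemigroup (n : ℕ) (S T : Set (PInj n)) : Prop :=
  T ⊆ S ∧ ∀ a ∈ T, ∀ b ∈ T, a.comp b ∈ T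

/-- `T` is a maximal subsemigroup of `S`. -/
def IsMaxSubsemigroup (n : ℕ) (S T : Set (PInj n)) : Prop :=
  IsSubsemigroup n S T ∧ T ≠ S ∧
  ∀ U : Set (PInj n), IsSubsemigroup n S U → T ⊆ U → U ⊆ S → U = T ∨ U = S

/-- The left "translate set" `Ma` in the monoid `M = IOF_n^par`. -/
def lset (n : ℕ) (a : PInj n) : Set (PInj n) := {c | ∃ m ∈ IOF n, m.comp a = c}

/-- The right "translate set" `aM` in the monoid `M = IOF_n^par`. -/
def rset (n : ℕ) (a : PInj n) : Set (PInj n) := {c | ∃ m ∈ IOF n, a.comp m = c}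

/-- The two-sided "translate set" `MaM` in the monoid `M = IOF_n^par`. -/
def jset (n : ℕ) (a : PInj n) : Set (PInj n) :=
  {c | ∃ m₁ ∈ IOF n, ∃ m₂ ∈ IOF n, (m₁.comp a).comp m₂ = c}


lemma comp_dom_subset {n : ℕ} (a b : PInj n) : (a.comp b).dom ⊆ a.dom := by
  intro x hx
  simp only [PInj.dom, Finset.mem_filter] at hx ⊢
  simp only [PInj.comp] at hx
  refine ⟨hx.1, ?_⟩
  rcases Option.isSome_iff_exists.mp hx.2 with ⟨y, hy⟩
  rcases Option.bind_eq_some_iff.mp hy with ⟨z, hz, _⟩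
  exact Option.isSome_iff_exists.mpr ⟨z, hz⟩

lemma rank_comp_le_left {n : ℕ} (a b : PInj n) : (a.comp b).rank ≤ a.rank :=
  Finset.card_le_card (comp_dom_subset a b)

lemma rank_comp_le_right {n : ℕ} (a b : PInj n) : (a.comp b).rank ≤ b.rank := by
  apply Finset.card_le_card_of_injOn (fun x => (a.f x).getD 0)
  · intro x hx
    simp only [Finset.mem_coe, PInj.dom, Finset.mem_filter] at hx
    simp only [PInj.comp] at hx
    rcases Option.isSome_iff_exists.mp hx.2 with ⟨y, hy⟩
    rcases Option.bind_eq_some_iff.mp hy with ⟨z, hz, hzy⟩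
    simp only [Finset.mem_coe, PInj.dom, Finset.mem_filter]
    rw [hz]
    exact ⟨(a.mem_bounds hz).2, Option.isSome_iff_exists.mpr ⟨y, hzy⟩⟩
  · intro x₁ h₁ x₂ h₂ heq
    simp only [Finset.coe_filter, PInj.dom, Set.mem_setOf_eq] at h₁ h₂
    simp only [PInj.comp] at h₁ h₂
    rcases Option.isSome_iff_exists.mp h₁.2 with ⟨y₁, hy₁⟩
    rcases Option.bind_eq_some_iff.mp hy₁ with ⟨z₁, hz₁, _⟩
    rcases Option.isSome_iff_exists.mp h₂.2 with ⟨y₂, hy₂⟩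
    rcases Option.bind_eq_some_iff.mp hy₂ with ⟨z₂, hz₂, _⟩
    simp only [hz₁, hz₂, Option.getD_some] at heq
    subst heq
    exact a.inj hz₁ hz₂

lemma IOF_comp {n : ℕ} {a b : PInj n} (ha : a ∈ IOF n) (hb : b ∈ IOF n) :
    a.comp b ∈ IOF n := by
  obtain ⟨ha1, ha2, ha3, ha4⟩ := ha
  obtain ⟨hb1, hb2, hb3, hb4⟩ := hb
  refine ⟨?_, ?_, ?_, ?_⟩
  · intro x y x' y' hx hy hlt
    rcases Option.bind_eq_some_iff.mp hx with ⟨u, hu, hux⟩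
    rcases Option.bind_eq_some_iff.mp hy with ⟨v, hv, hvy⟩
    exact hb1 hux hvy (ha1 hu hv hlt)
  · intro x y hx
    rcases Option.bind_eq_some_iff.mp hx with ⟨u, hu, huy⟩
    exact (ha2 hu).trans (hb2 huy)
  · intro x y x' y' hx hy hf
    rcases Option.bind_eq_some_iff.mp hx with ⟨u, hu, hux⟩
    rcases Option.bind_eq_some_iff.mp hy with ⟨v, hv, hvy⟩
    exact hb3 hux hvy (ha3 hu hv hf)
  · intro x y x' y' hx hy hf
    rcases Option.bind_eq_some_iff.mp hx with ⟨u, hu, hux⟩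
    rcases Option.bind_eq_some_iff.mp hy with ⟨v, hv, hvy⟩
    exact ha4 hu hv (hb4 hux hvy hf)

lemma IX_comp {n : ℕ} {P : Set (Finset ℕ)} (hP : Admissible n P)
    {a b : PInj n} (ha : a ∈ IX n P) (hb : b ∈ IX n P) : a.comp b ∈ IX n P := by
  refine ⟨IOF_comp ha.1 hb.1, ?_⟩
  exact hP.2.2.1 ∅ hP.2.1 a.dom ha.2 (a.comp b).dom (Finset.empty_subset _)
    (comp_dom_subset a b)

/-- The subsemigroup generated by a set. -/
inductive Gen {n : ℕ} (S : Set (PInj n)) : PInj n → Prop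
  | base {a : PInj n} : a ∈ S → Gen S a
  | mul {a b : PInj n} : Gen S a → Gen S b → Gen S (a.comp b)

lemma key_lemma {n : ℕ} {P : Set (Finset ℕ)} (hP : Admissible n P)
    {J : Set (PInj n)} (hJ : IsMaxSubsemigroup n (IX n P) J)
    {x : PInj n} (hx : x ∈ IX n P) (hxJ : x ∉ J)
    {γ : PInj n} (hγ : γ ∈ IX n P) : γ ∈ J ∨ γ.rank ≤ x.rank := by
  set U : Set (PInj n) := {c | Gen (J ∪ {x}) c} with hU
  have hUIX : U ⊆ IX n P := by
    intro c hc
    induction hc with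
    | base h =>
      rcases h with h | h
      · exact hJ.1.1 h
      · rw [Set.mem_singleton_iff] at h; exact h ▸ hx
    | mul _ _ iha ihb => exact IX_comp hP iha ihb
  have hsub : IsSubsemigroup n (IX n P) U :=
    ⟨hUIX, fun a ha b hb => Gen.mul ha hb⟩
  have hJU : J ⊆ U := fun c hc => Gen.base (Set.mem_union_left _ hc)
  rcases hJ.2.2 U hsub hJU hUIX with hUJ | hUIXeq
  · exact absurd (hUJ ▸ Gen.base (Set.mem_union_right _ rfl) : x ∈ J) hxJ
  · have hγU : γ ∈ U := hUIXeq ▸ hγ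
    clear hUIXeq hsub hJU hUIX hγ
    induction hγU with
    | base h =>
      rcases h with h | h
      · exact Or.inl h
      · rw [Set.mem_singleton_iff] at h; exact Or.inr (h ▸ le_refl _)
    | mul ha hb iha ihb =>
      rcases iha with h1 | h1
      · rcases ihb with h2 | h2
        · exact Or.inl (hJ.1.2 _ h1 _ h2)
        · exact Or.inr ((rank_comp_le_right _ _).trans h2)
      · exact Or.inr ((rank_comp_le_left _ _).trans h1)

/-- If `J` is a maximal subsemigroup of `I_{P*}` and `α ∉ J`,
then every `β ∈ I_{P*}` with `rank(β) ≠ rank(α)` lies in `J`. -/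
theorem statement_12 (n : ℕ) (hn : 0 < n) (P : Set (Finset ℕ)) (hP : Admissible n P)
    (J : Set (PInj n)) (hJ : IsMaxSubsemigroup n (IX n P) J)
    (α : PInj n) (hα : α ∈ IX n P) (hαJ : α ∉ J)
    (β : PInj n) (hβ : β ∈ IX n P) (hrank : β.rank ≠ α.rank) : β ∈ J := by
  by_contra hβJ
  rcases key_lemma hP hJ hα hαJ hβ with h1 | h1
  · exact hβJ h1
  rcases key_lemma hP hJ hβ hβJ hα with h2 | h2
  · exact hαJ h2
  exact hrank (le_antisymm h1 h2)

end IOFpar
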